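/- Let n, p ≥ 1 and l ≥ 0 be integers such that p̂ = n̂ + l and p̌ ≥ 2^l · ň (i.e., p lies in the domination wedge W(n)). Then χ_p ≥ χ_n; equivalently, γ_p · 2^(n − n̂) ≤ γ_n · 2^(p − p̂). -/

import Mathlib

/-- A finite subset of the hypercube `Q_n = (ZMod 2)^n` is dominating if every point of the
hypercube is at Hamming distance at most 1 from some element of the subset. -/
def IsDominating {n : ℕ} (Δ : Finset (Fin n → ZMod 2)) : Prop :=
  ∀ y : Fin n → ZMod 2, ∃ x ∈ Δ, hammingDist x y ≤ 1

/-- The minimal domination number `γ_n` of the `n`-dimensional hypercube. -/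
noncomputable def gamma (n : ℕ) : ℕ :=
  sInf {k | ∃ Δ : Finset (Fin n → ZMod 2), IsDominating Δ ∧ Δ.card = k}

/-- The multiplicative gain `χ_n = 1 - γ_n · 2^(n̂ - n)`, where `n̂ = ⌊log₂ (n+1)⌋`. -/
noncomputable def chi (n : ℕ) : ℚ :=
  1 - (gamma n : ℚ) * (2 : ℚ) ^ ((Nat.log 2 (n + 1) : ℤ) - (n : ℤ))

section Aux
set_option linter.unusedSectionVars false
open Finset

variable {ι κ : Type*} [Fintype ι] [DecidableEq ι] [Fintype κ] [DecidableEq κ]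

/-- Generalized domination over an arbitrary finite index type. -/
def IsDomG (Δ : Finset (ι → ZMod 2)) : Prop := ∀ y, ∃ x ∈ Δ, hammingDist x y ≤ 1

lemma isDomG_iff {n : ℕ} (Δ : Finset (Fin n → ZMod 2)) : IsDominating Δ ↔ IsDomG Δ := Iff.rfl

lemma hd_eq_sum (x y : ι → ZMod 2) :
    hammingDist x y = ∑ i, if x i ≠ y i then 1 else 0 := Finset.card_filter _ _

lemma hd_sum' (x y : ι ⊕ κ → ZMod 2) :
    hammingDist x y = hammingDist (x ∘ Sum.inl) (y ∘ Sum.inl)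
      + hammingDist (x ∘ Sum.inr) (y ∘ Sum.inr) := by
  rw [hd_eq_sum, hd_eq_sum, hd_eq_sum, Fintype.sum_sum_type]; rfl

lemma hd_comp (e : ι ≃ κ) (x y : κ → ZMod 2) :
    hammingDist (x ∘ e) (y ∘ e) = hammingDist x y := by
  rw [hd_eq_sum, hd_eq_sum]
  exact Fintype.sum_equiv e _ _ (fun i => rfl)

lemma zmod2_ne {u v : ZMod 2} : u ≠ v ↔ u + 1 = v := by revert u v; decide

lemma zmod2_add_ne {u v w : ZMod 2} : u + w ≠ v ↔ w ≠ u + v := by revert u v w; decide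

lemma hd_shift (a d b : ι → ZMod 2) : hammingDist (a + d) b = hammingDist d (a + b) := by
  rw [hd_eq_sum, hd_eq_sum]
  exact Finset.sum_congr rfl fun j _ => if_congr (by simpa using zmod2_add_ne) rfl rfl

lemma domG_transfer (e : ι ≃ κ) {Δ : Finset (ι → ZMod 2)} (h : IsDomG Δ) :
    ∃ Δ' : Finset (κ → ZMod 2), IsDomG Δ' ∧ Δ'.card ≤ Δ.card := by
  refine ⟨Δ.image (fun x => x ∘ e.symm), ?_, Finset.card_image_le⟩
  intro y
  obtain ⟨x, hx, hd⟩ := h (y ∘ e)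
  refine ⟨x ∘ e.symm, Finset.mem_image_of_mem _ hx, ?_⟩
  have h2 : (x ∘ e.symm) ∘ e = x := by ext i; simp
  calc hammingDist (x ∘ ⇑e.symm) y = hammingDist ((x ∘ ⇑e.symm) ∘ e) (y ∘ e) :=
        (hd_comp e _ _).symm
    _ ≤ 1 := by rw [h2]; exact hd

lemma domG_double {Δ : Finset (ι → ZMod 2)} (h : IsDomG Δ) :
    ∃ Δ' : Finset (ι ⊕ Fin 1 → ZMod 2), IsDomG Δ' ∧ Δ'.card ≤ 2 * Δ.card := by
  refine ⟨(Δ ×ˢ (univ : Finset (ZMod 2))).image (fun xb => Sum.elim xb.1 (fun _ => xb.2)), ?_, ?_⟩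
  · intro y
    obtain ⟨x, hx, hd⟩ := h (y ∘ Sum.inl)
    refine ⟨Sum.elim x (fun _ => y (Sum.inr 0)),
      Finset.mem_image.2 ⟨(x, y (Sum.inr 0)), mem_product.2 ⟨hx, mem_univ _⟩, rfl⟩, ?_⟩
    rw [hd_sum']
    have h2 : (Sum.elim x (fun _ : Fin 1 => y (Sum.inr 0))) ∘ Sum.inr = y ∘ Sum.inr := by
      ext i; simp [Subsingleton.elim i 0]
    rw [h2, hammingDist_self]
    simpa using hd
  · refine Finset.card_image_le.trans ?_
    rw [Finset.card_product, Finset.card_univ]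
    simp [ZMod.card]
    omega

lemma domG_jump {Δ : Finset (ι → ZMod 2)} (h : IsDomG Δ) :
    ∃ Δ' : Finset ((ι ⊕ ι) ⊕ Fin 1 → ZMod 2), IsDomG Δ' ∧
      Δ'.card ≤ 2 ^ Fintype.card ι * Δ.card := by
  classical
  set f : (ι → ZMod 2) × (ι → ZMod 2) → ((ι ⊕ ι) ⊕ Fin 1 → ZMod 2) :=
    fun xd => Sum.elim (Sum.elim xd.1 (xd.1 + xd.2)) (fun _ => ∑ i, xd.1 i) with hf
  refine ⟨((univ : Finset (ι → ZMod 2)) ×ˢ Δ).image f, ?_, ?_⟩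
  · intro y
    set a : ι → ZMod 2 := y ∘ Sum.inl ∘ Sum.inl with ha
    set b : ι → ZMod 2 := y ∘ Sum.inl ∘ Sum.inr with hb
    set t : ZMod 2 := y (Sum.inr 0) with ht
    obtain ⟨d, hdΔ, hdd⟩ := h (a + b)
    have hmem : ∀ x : ι → ZMod 2, f (x, d) ∈ ((univ : Finset (ι → ZMod 2)) ×ˢ Δ).image f :=
      fun x => Finset.mem_image.2 ⟨(x, d), mem_product.2 ⟨mem_univ _, hdΔ⟩, rfl⟩
    have hdecomp : ∀ x : ι → ZMod 2, hammingDist (f (x, d)) y =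
        hammingDist x a + hammingDist (x + d) b
          + hammingDist (fun _ : Fin 1 => ∑ i, x i) (y ∘ Sum.inr) := by
      intro x
      rw [hd_sum', hd_sum']
      rfl
    have hthird : ∀ c : ZMod 2, hammingDist (fun _ : Fin 1 => c) (y ∘ Sum.inr) ≤ 1 := by
      intro c
      simpa using hammingDist_le_card_fintype (x := fun _ : Fin 1 => c) (y := y ∘ Sum.inr)
    have hthird_eq : ∀ c : ZMod 2, c = t →
        hammingDist (fun _ : Fin 1 => c) (y ∘ Sum.inr) = 0 := by
      intro c hc
      rw [hammingDist_eq_zero]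
      funext i
      rw [hc, ht, Subsingleton.elim i 0]
      rfl
    by_cases hpa : (∑ i, a i) = t
    · refine ⟨f (a, d), hmem a, ?_⟩
      rw [hdecomp, hammingDist_self, hd_shift, hthird_eq _ hpa]
      omega
    · by_cases hd0 : d = a + b
      · refine ⟨f (a, d), hmem a, ?_⟩
        rw [hdecomp, hammingDist_self, hd_shift, hd0, hammingDist_self]
        simpa using hthird _
      · have hex : ∃ i, d i ≠ (a + b) i := by
          by_contra hc
          push_neg at hc
          exact hd0 (funext hc)
        obtain ⟨i, hi⟩ := hex
        have hcard : (univ.filter fun j => d j ≠ (a + b) j).card ≤ 1 := hdd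
        have huniq : ∀ j, d j ≠ (a + b) j → j = i := by
          intro j hj
          exact Finset.card_le_one.1 hcard j (mem_filter.2 ⟨mem_univ _, hj⟩)
            i (mem_filter.2 ⟨mem_univ _, hi⟩)
        set e : ι → ZMod 2 := fun j => if j = i then 1 else 0 with he
        refine ⟨f (a + e, d), hmem _, ?_⟩
        rw [hdecomp]
        have h0 : ∀ u : ZMod 2, u + u = 0 := by decide
        have h1 : hammingDist (a + e) a = 1 := by
          rw [hd_shift, hd_eq_sum]
          rw [Finset.sum_eq_single i]
          · have : e i ≠ (a + a) i := by
              have h1 : e i = 1 := by rw [he]; simp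
              rw [h1, Pi.add_apply, h0]
              decide
            rw [if_pos this]
          · intro j _ hj
            have : ¬ (e j ≠ (a + a) j) := by
              have h1 : e j = 0 := by rw [he]; simp [hj]
              rw [h1, Pi.add_apply, h0]
              simp
            rw [if_neg this]
          · simp
        have h2 : a + e + d = b := by
          have : e + d = a + b := by
            funext j
            by_cases hj : j = i
            · subst hj
              have := zmod2_ne.1 hi
              simp only [he, Pi.add_apply, if_pos rfl]
              rw [add_comm]
              exact this
            · have hdj : d j = (a + b) j := by
                by_contra hc
                exact hj (huniq j hc)
              simp [he, hj, hdj]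
          rw [add_assoc, this]
          funext j
          simp only [Pi.add_apply, ← add_assoc, h0, zero_add]
        have h3 : (∑ j, (a + e) j) = t := by
          have hsum : (∑ j, (a + e) j) = (∑ j, a j) + 1 := by
            simp only [Pi.add_apply, Finset.sum_add_distrib]
            congr 1
            simp [he]
          rw [hsum]
          exact zmod2_ne.1 hpa
        rw [h2, hammingDist_self, h1, hthird_eq _ h3]
  · refine Finset.card_image_le.trans ?_
    rw [Finset.card_product, Finset.card_univ]
    simp [ZMod.card]

lemma gamma_exists (n : ℕ) :
    ∃ Δ : Finset (Fin n → ZMod 2), IsDominating Δ ∧ Δ.card = gamma n := by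
  have hne : {k | ∃ Δ : Finset (Fin n → ZMod 2), IsDominating Δ ∧ Δ.card = k}.Nonempty :=
    ⟨_, univ, fun y => ⟨y, mem_univ _, by simp⟩, rfl⟩
  exact Nat.sInf_mem hne

lemma gamma_le {n k : ℕ} (Δ : Finset (Fin n → ZMod 2)) (h : IsDominating Δ)
    (hc : Δ.card ≤ k) : gamma n ≤ k :=
  le_trans (Nat.sInf_le ⟨Δ, h, rfl⟩) hc

lemma gamma_succ (n : ℕ) : gamma (n + 1) ≤ 2 * gamma n := by
  obtain ⟨Δ, hΔ, hcard⟩ := gamma_exists n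
  obtain ⟨Δ₁, h1, hc1⟩ := domG_double ((isDomG_iff Δ).1 hΔ)
  obtain ⟨Δ₂, h2, hc2⟩ := domG_transfer (finSumFinEquiv : Fin n ⊕ Fin 1 ≃ Fin (n + 1)) h1
  exact gamma_le Δ₂ ((isDomG_iff Δ₂).2 h2) (hc2.trans (hc1.trans (by omega)))

lemma gamma_jump (n : ℕ) : gamma (2 * n + 1) ≤ 2 ^ n * gamma n := by
  obtain ⟨Δ, hΔ, hcard⟩ := gamma_exists n
  obtain ⟨Δ₁, h1, hc1⟩ := domG_jump ((isDomG_iff Δ).1 hΔ)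
  have e : (Fin n ⊕ Fin n) ⊕ Fin 1 ≃ Fin (2 * n + 1) :=
    (Equiv.sumCongr (finSumFinEquiv : Fin n ⊕ Fin n ≃ Fin (n + n)) (Equiv.refl (Fin 1))).trans
      ((finSumFinEquiv : Fin (n + n) ⊕ Fin 1 ≃ Fin (n + n + 1)).trans (finCongr (by ring)))
  obtain ⟨Δ₂, h2, hc2⟩ := domG_transfer e h1
  refine gamma_le Δ₂ ((isDomG_iff Δ₂).2 h2) (hc2.trans (hc1.trans ?_))
  simp [hcard]

lemma gamma_add_le (n k : ℕ) : gamma (n + k) ≤ 2 ^ k * gamma n := by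
  induction k with
  | zero => simp
  | succ k ih =>
    calc gamma (n + (k + 1)) = gamma ((n + k) + 1) := by ring_nf
      _ ≤ 2 * gamma (n + k) := gamma_succ _
      _ ≤ 2 * (2 ^ k * gamma n) := by omega
      _ = 2 ^ (k + 1) * gamma n := by ring

lemma gamma_key (l : ℕ) : ∀ n p : ℕ,
    Nat.log 2 (p + 1) = Nat.log 2 (n + 1) + l →
    2 ^ l * (n + 1 - 2 ^ Nat.log 2 (n + 1)) ≤ p + 1 - 2 ^ Nat.log 2 (p + 1) →
    gamma p * 2 ^ (n - Nat.log 2 (n + 1)) ≤ gamma n * 2 ^ (p - Nat.log 2 (p + 1)) := by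
  induction l with
  | zero =>
    intro n p h1 h2
    simp only [Nat.add_zero, pow_zero, one_mul] at h1 h2
    have hn1 : 2 ^ Nat.log 2 (n + 1) ≤ n + 1 := Nat.pow_log_le_self 2 (by omega)
    have hp1 : 2 ^ Nat.log 2 (p + 1) ≤ p + 1 := Nat.pow_log_le_self 2 (by omega)
    have hnn : Nat.log 2 (n + 1) ≤ n := by
      have := Nat.log_lt_self 2 (show n + 1 ≠ 0 by omega); omega
    have hpe : 2 ^ Nat.log 2 (p + 1) = 2 ^ Nat.log 2 (n + 1) := by rw [h1]
    have hnp : n ≤ p := by omega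
    have hd : gamma p ≤ 2 ^ (p - n) * gamma n := by
      have := gamma_add_le n (p - n)
      rwa [Nat.add_sub_cancel' hnp] at this
    calc gamma p * 2 ^ (n - Nat.log 2 (n + 1))
        ≤ (2 ^ (p - n) * gamma n) * 2 ^ (n - Nat.log 2 (n + 1)) :=
          Nat.mul_le_mul_right _ hd
      _ = gamma n * 2 ^ ((p - n) + (n - Nat.log 2 (n + 1))) := by rw [pow_add]; ring
      _ = gamma n * 2 ^ (p - Nat.log 2 (p + 1)) := by
          congr 2
          rw [← h1]
          omega
  | succ l ih =>
    intro n p h1 h2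
    set m := 2 * n + 1 with hm
    have hn1 : 2 ^ Nat.log 2 (n + 1) ≤ n + 1 := Nat.pow_log_le_self 2 (by omega)
    have hnn : Nat.log 2 (n + 1) ≤ n := by
      have := Nat.log_lt_self 2 (show n + 1 ≠ 0 by omega); omega
    have hm1 : Nat.log 2 (m + 1) = Nat.log 2 (n + 1) + 1 := by
      have hmne : m + 1 = (n + 1) * 2 := by omega
      rw [hmne, Nat.log_mul_base (by norm_num) (by omega)]
    have h1' : Nat.log 2 (p + 1) = Nat.log 2 (m + 1) + l := by omega
    have h2' : 2 ^ l * (m + 1 - 2 ^ Nat.log 2 (m + 1)) ≤ p + 1 - 2 ^ Nat.log 2 (p + 1) := by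
      have hsub : m + 1 - 2 ^ Nat.log 2 (m + 1) = 2 * (n + 1 - 2 ^ Nat.log 2 (n + 1)) := by
        rw [hm1, pow_succ]
        omega
      rw [hsub]
      calc 2 ^ l * (2 * (n + 1 - 2 ^ Nat.log 2 (n + 1)))
          = 2 ^ (l + 1) * (n + 1 - 2 ^ Nat.log 2 (n + 1)) := by ring
        _ ≤ _ := h2
    have hIH := ih m p h1' h2'
    have hjump : gamma m ≤ 2 ^ n * gamma n := gamma_jump n
    have hmm : m - Nat.log 2 (m + 1) = (n - Nat.log 2 (n + 1)) + n := by omega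
    have hpos : 0 < 2 ^ n := Nat.pow_pos (by norm_num)
    refine Nat.le_of_mul_le_mul_right ?_ hpos
    calc gamma p * 2 ^ (n - Nat.log 2 (n + 1)) * 2 ^ n
        = gamma p * 2 ^ (m - Nat.log 2 (m + 1)) := by rw [hmm, pow_add]; ring
      _ ≤ gamma m * 2 ^ (p - Nat.log 2 (p + 1)) := hIH
      _ ≤ (2 ^ n * gamma n) * 2 ^ (p - Nat.log 2 (p + 1)) := Nat.mul_le_mul_right _ hjump
      _ = gamma n * 2 ^ (p - Nat.log 2 (p + 1)) * 2 ^ n := by ring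

end Aux

/-- If `p ∈ W(n)`, i.e. `p̂ = n̂ + l` and `p̌ ≥ 2^l · ň` for some `l ≥ 0`
(where `n̂ = ⌊log₂(n+1)⌋` and `ň = n + 1 - 2^n̂`), then `χ_p ≥ χ_n`;
equivalently `γ_p · 2^(n - n̂) ≤ γ_n · 2^(p - p̂)`. -/
theorem stmt_10 (n p l : ℕ) (hn : 1 ≤ n) (hp : 1 ≤ p)
    (h1 : Nat.log 2 (p + 1) = Nat.log 2 (n + 1) + l)
    (h2 : 2 ^ l * (n + 1 - 2 ^ Nat.log 2 (n + 1)) ≤ p + 1 - 2 ^ Nat.log 2 (p + 1)) :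
    chi n ≤ chi p ∧
    gamma p * 2 ^ (n - Nat.log 2 (n + 1)) ≤ gamma n * 2 ^ (p - Nat.log 2 (p + 1)) := by
  have G := gamma_key l n p h1 h2
  refine ⟨?_, G⟩
  have hnn : Nat.log 2 (n + 1) ≤ n := by
    have := Nat.log_lt_self 2 (show n + 1 ≠ 0 by omega); omega
  have hpp : Nat.log 2 (p + 1) ≤ p := by
    have := Nat.log_lt_self 2 (show p + 1 ≠ 0 by omega); omega
  have en : ((Nat.log 2 (n + 1) : ℤ) - (n : ℤ)) = -((n - Nat.log 2 (n + 1) : ℕ) : ℤ) := by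
    push_cast [Nat.cast_sub hnn]; ring
  have ep : ((Nat.log 2 (p + 1) : ℤ) - (p : ℤ)) = -((p - Nat.log 2 (p + 1) : ℕ) : ℤ) := by
    push_cast [Nat.cast_sub hpp]; ring
  rw [chi, chi, en, ep]
  apply sub_le_sub_left
  rw [zpow_neg, zpow_natCast, zpow_neg, zpow_natCast, ← div_eq_mul_inv, ← div_eq_mul_inv,
    div_le_div_iff₀ (by positivity) (by positivity)]
  exact_mod_cast G
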